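/- Let Θ be the linear isomorphism on decorated trees characterized recursively by Θ(X^k ∏_{i=1}^n I_{aᵢ}(τᵢ)) = Σ_{ℓ ∈ (ℕ^{d+1})^n} C(k; ℓ) · X^{k−|ℓ|} ∏_{i=1}^n I_{aᵢ−ℓᵢ}(Θ(τᵢ)), with Θ(X^k) = X^k. Then Θ is triangular for the grading by sums of edge decorations: Θ(τ) = τ + (terms of strictly lower grading), and hence Θ is a linear isomorphism. -/

import Mathlib

/-- Planar rooted trees with vertex decorations in `V` and edge decorations in `E`. -/
inductive RT (V E : Type) : Type where
  | node : V → List (E × RT V E) → RT V E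

/-- One-step reordering of children (at the root or at a deeper vertex). -/
inductive Swap {V E : Type} : RT V E → RT V E → Prop where
  | here (v : V) (l₁ l₂ : List (E × RT V E)) (p q : E × RT V E) :
      Swap (.node v (l₁ ++ p :: q :: l₂)) (.node v (l₁ ++ q :: p :: l₂))
  | child (v : V) (l₁ l₂ : List (E × RT V E)) (e : E) {t t' : RT V E} :
      Swap t t' → Swap (.node v (l₁ ++ (e, t) :: l₂)) (.node v (l₁ ++ (e, t') :: l₂))

/-- (Non-planar) decorated rooted trees: planar trees modulo reordering of children. -/
def QT (V E : Type) : Type := Quot (@Swap V E)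

/-- The linear span of decorated rooted trees, with rational coefficients. -/
abbrev Span (V E : Type) : Type := QT V E →₀ ℚ

def qt {V E : Type} (t : RT V E) : QT V E := Quot.mk _ t

/-- A tree, as a basis vector of the span. -/
noncomputable def bas {V E : Type} (t : RT V E) : Span V E := Finsupp.single (qt t) 1

/-- The element of the span given by a list of trees (sum with multiplicity). -/
noncomputable def ofList {V E : Type} (l : List (RT V E)) : Span V E := (l.map bas).sum

/-- Formal rational combination of planar trees, as an element of the span. -/
noncomputable def combo {V E : Type} (l : List (ℚ × RT V E)) : Span V E :=
  (l.map fun p => p.1 • bas p.2).sum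

mutual
/-- List of the graftings of `σ` on each vertex of a tree, via a new `a`-edge. -/
def graftT {V E : Type} (a : E) (σ : RT V E) : RT V E → List (RT V E)
  | .node v l => .node v ((a, σ) :: l) :: (graftL a σ l).map (.node v)
/-- Auxiliary: graftings of `σ` inside one of the listed subtrees. -/
def graftL {V E : Type} (a : E) (σ : RT V E) :
    List (E × RT V E) → List (List (E × RT V E))
  | [] => []
  | (e, t) :: r =>
      ((graftT a σ t).map fun t' => (e, t') :: r)
        ++ ((graftL a σ r).map fun r' => (e, t) :: r')
end

/-- Multi-indices in `ℕ^{d+1}`. -/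
abbrev Nd (d : ℕ) : Type := Fin (d + 1) → ℕ

/-- Componentwise binomial coefficient on `ℕ^{d+1}` (zero if some component exceeds). -/
def binom {d : ℕ} (n ℓ : Nd d) : ℕ := ∏ c, Nat.choose (n c) (ℓ c)

/-- The scaled degree `|n|_s = Σ_c s_c · n_c` of a multi-index. -/
def sdeg {d : ℕ} (s : Nd d) (n : Nd d) : ℕ := ∑ c, s c * n c

mutual
/-- The grading of a decorated tree: the sum of the `|·|_s`-degrees of its edge
decorations. -/
def gradT {L : Type} {d : ℕ} (s : Nd d) : RT (Nd d) (L × Nd d) → ℕ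
  | .node _ l => gradL s l
def gradL {L : Type} {d : ℕ} (s : Nd d) : List ((L × Nd d) × RT (Nd d) (L × Nd d)) → ℕ
  | [] => 0
  | (e, t) :: r => sdeg s e.2 + gradT s t + gradL s r
end

mutual
/-- The isomorphism `Θ` on (planar representatives of) decorated trees, characterized
recursively by `Θ(X^k ∏ᵢ I_{aᵢ}(τᵢ)) = Σ_ℓ C(k;ℓ) X^{k−|ℓ|} ∏ᵢ I_{aᵢ−ℓᵢ}(Θ(τᵢ))`
(with `Θ(X^k) = X^k`); the multinomial `C(k;ℓ)` is produced as an iterated product of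
binomial coefficients while threading the remaining root decoration through the list of
root branches; terms with negative decorations vanish.  The result is a formal rational
combination of planar trees. -/
noncomputable def ThT {L : Type} {d : ℕ} :
    RT (Nd d) (L × Nd d) → List (ℚ × RT (Nd d) (L × Nd d))
  | .node k l => (ThL k l).map fun p => (p.1, RT.node p.2.1 p.2.2)
/-- Auxiliary: processes the root branches, threading the remaining root decoration. -/
noncomputable def ThL {L : Type} {d : ℕ} (k : Nd d) :
    List ((L × Nd d) × RT (Nd d) (L × Nd d)) →
      List (ℚ × (Nd d × List ((L × Nd d) × RT (Nd d) (L × Nd d))))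
  | [] => [(1, (k, []))]
  | (a, t) :: r =>
      (Finset.Iic (k ⊓ a.2)).toList.flatMap fun ℓ =>
        (ThT t).flatMap fun p =>
          (ThL (k - ℓ) r).map fun q =>
            ((binom k ℓ : ℚ) * p.1 * q.1, (q.2.1, ((a.1, a.2 - ℓ), p.2) :: q.2.2))
end

section Helpers

lemma nd_sub_zero {d : ℕ} (k : Nd d) : k - 0 = k := funext fun c => Nat.sub_zero _

lemma binom_zero {d : ℕ} (k : Nd d) : binom k 0 = 1 := by simp [binom]

lemma sdeg_sub_le {d : ℕ} (s a ℓ : Nd d) : sdeg s (a - ℓ) ≤ sdeg s a := by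
  refine Finset.sum_le_sum fun c _ => ?_
  exact Nat.mul_le_mul_left _ (Nat.sub_le _ _)

lemma sdeg_sub_lt {d : ℕ} {s : Nd d} (hs : ∀ c, 0 < s c) {a ℓ : Nd d}
    (hla : ℓ ≤ a) (hl : ℓ ≠ 0) : sdeg s (a - ℓ) < sdeg s a := by
  obtain ⟨c, hc⟩ : ∃ c, ℓ c ≠ 0 := by
    by_contra h; push_neg at h; exact hl (funext fun c => h c)
  refine Finset.sum_lt_sum (fun c _ => Nat.mul_le_mul_left _ (Nat.sub_le _ _))
    ⟨c, Finset.mem_univ c, ?_⟩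
  have h1 : 0 < ℓ c := Nat.pos_of_ne_zero hc
  have h2 : ℓ c ≤ a c := hla c
  have : a c - ℓ c < a c := Nat.sub_lt (lt_of_lt_of_le h1 h2) h1
  calc s c * (a - ℓ) c = s c * (a c - ℓ c) := rfl
    _ < s c * a c := mul_lt_mul_of_pos_left this (hs c)

lemma perm_cons_flatMap {β γ : Type*} {A lA : List β} {x : β} (hA : A.Perm (x :: lA))
    (F : β → List γ) {y : γ} {m : List γ} (h : (F x).Perm (y :: m)) :
    ∃ m', (A.flatMap F).Perm (y :: m') ∧ ∀ c ∈ m', c ∈ m ∨ ∃ b ∈ lA, c ∈ F b := by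
  refine ⟨m ++ lA.flatMap F, ?_, ?_⟩
  · refine (hA.flatMap_right F).trans ?_
    rw [List.flatMap_cons]
    exact h.append_right _
  · intro c hc
    rcases List.mem_append.1 hc with h' | h'
    · exact Or.inl h'
    · exact Or.inr (List.mem_flatMap.1 h')

lemma perm_cons_map {β γ : Type*} {A lA : List β} {x : β} (hA : A.Perm (x :: lA))
    (F : β → γ) : ∃ m', (A.map F).Perm (F x :: m') ∧ ∀ c ∈ m', ∃ b ∈ lA, c = F b :=
  ⟨lA.map F, hA.map F, by simp [eq_comm]⟩

end Helpers

mutual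

theorem keyT {L : Type} {d : ℕ} (s : Nd d) (hs : ∀ c, 0 < s c) :
    ∀ t : RT (Nd d) (L × Nd d),
      (∀ p ∈ ThT t, gradT s p.2 ≤ gradT s t) ∧
      ∃ m, (ThT t).Perm ((1, t) :: m) ∧ ∀ p ∈ m, gradT s p.2 < gradT s t
  | .node k l => by
    obtain ⟨hb, m, hperm, hlt⟩ := keyL s hs k l
    constructor
    · intro p hp
      simp only [ThT, List.mem_map] at hp
      obtain ⟨q, hq, rfl⟩ := hp
      simpa [gradT] using hb q hq
    · refine ⟨m.map (fun p => (p.1, RT.node p.2.1 p.2.2)), ?_, ?_⟩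
      · rw [ThT]
        exact hperm.map _
      · intro p hp
        simp only [List.mem_map] at hp
        obtain ⟨q, hq, rfl⟩ := hp
        simpa [gradT] using hlt q hq
  termination_by t => sizeOf t

theorem keyL {L : Type} {d : ℕ} (s : Nd d) (hs : ∀ c, 0 < s c) :
    ∀ (k : Nd d) (l : List ((L × Nd d) × RT (Nd d) (L × Nd d))),
      (∀ p ∈ ThL k l, gradL s p.2.2 ≤ gradL s l) ∧
      ∃ m, (ThL k l).Perm ((1, (k, l)) :: m) ∧ ∀ p ∈ m, gradL s p.2.2 < gradL s l
  | k, [] => by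
    constructor
    · intro p hp
      simp only [ThL, List.mem_singleton] at hp
      subst hp
      exact le_refl _
    · exact ⟨[], by rw [ThL], by simp⟩
  | k, (a, t) :: r => by
    obtain ⟨hbt, lt, hpt, hltT⟩ := keyT s hs t
    have hb : ∀ p ∈ ThL k ((a, t) :: r), gradL s p.2.2 ≤ gradL s ((a, t) :: r) := by
      intro p hp
      simp only [ThL, List.mem_flatMap, List.mem_map] at hp
      obtain ⟨ℓ, hℓ, pt, hptm, q, hq, rfl⟩ := hp
      have h1 : sdeg s (a.2 - ℓ) ≤ sdeg s a.2 := sdeg_sub_le s a.2 ℓ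
      have h2 : gradT s pt.2 ≤ gradT s t := hbt pt hptm
      have h3 : gradL s q.2.2 ≤ gradL s r := (keyL s hs (k - ℓ) r).1 q hq
      simp only [gradL]
      omega
    refine ⟨hb, ?_⟩
    obtain ⟨mr, hqr, hmr⟩ := (keyL s hs (k - 0) r).2
    have h0mem : (0 : Nd d) ∈ (Finset.Iic (k ⊓ a.2)).toList :=
      Finset.mem_toList.2 (Finset.mem_Iic.2 zero_le)
    have hItoList : (Finset.Iic (k ⊓ a.2)).toList.Perm
        ((0 : Nd d) :: (Finset.Iic (k ⊓ a.2)).toList.erase 0) :=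
      List.perm_cons_erase h0mem
    -- innermost : map over ThL (k - 0) r
    obtain ⟨m1, hm1P, hm1⟩ := perm_cons_map hqr
      (fun q => ((binom k (0 : Nd d) : ℚ) * (1 : ℚ) * q.1,
        (q.2.1, ((a.1, a.2 - (0 : Nd d)), t) :: q.2.2)))
    -- middle : flatMap over ThT t
    obtain ⟨m2, hm2P, hm2⟩ := perm_cons_flatMap hpt
      (fun p => (ThL (k - (0 : Nd d)) r).map fun q =>
        ((binom k (0 : Nd d) : ℚ) * p.1 * q.1,
          (q.2.1, ((a.1, a.2 - (0 : Nd d)), p.2) :: q.2.2))) hm1P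
    -- outer : flatMap over Iic
    obtain ⟨m3, hm3P, hm3⟩ := perm_cons_flatMap hItoList
      (fun ℓ => (ThT t).flatMap fun p =>
        (ThL (k - ℓ) r).map fun q =>
          ((binom k ℓ : ℚ) * p.1 * q.1,
            (q.2.1, ((a.1, a.2 - ℓ), p.2) :: q.2.2))) hm2P
    have hy : ((binom k (0 : Nd d) : ℚ) * (1 : ℚ) * ((1 : ℚ), (k - (0 : Nd d), r)).1,
        (((1 : ℚ), (k - (0 : Nd d), r)).2.1,
          ((a.1, a.2 - (0 : Nd d)), t) :: ((1 : ℚ), (k - (0 : Nd d), r)).2.2))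
        = ((1 : ℚ), (k, (a, t) :: r)) := by
      simp [binom_zero, nd_sub_zero]
    refine ⟨m3, ?_, ?_⟩
    · rw [ThL]
      rw [hy] at hm3P
      exact hm3P
    · intro c hc
      have hgoal : gradL s ((a, t) :: r) = sdeg s a.2 + gradT s t + gradL s r := by
        simp [gradL]
      rcases hm3 c hc with hc2 | ⟨ℓ, hℓmem, hcF⟩
      · rcases hm2 c hc2 with hc1 | ⟨p, hplt, hcF⟩
        · -- from mr : strictly smaller tail
          obtain ⟨q, hq, rfl⟩ := hm1 c hc1
          have h3 : gradL s q.2.2 < gradL s r := hmr q hq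
          simp only [gradL, hgoal, nd_sub_zero]
          omega
        · -- from lt : strictly smaller subtree
          simp only [List.mem_map] at hcF
          obtain ⟨q, hq, rfl⟩ := hcF
          have h2 : gradT s p.2 < gradT s t := hltT p hplt
          have h3 : gradL s q.2.2 ≤ gradL s r := (keyL s hs (k - 0) r).1 q hq
          have h1 : sdeg s (a.2 - (0 : Nd d)) ≤ sdeg s a.2 := sdeg_sub_le s a.2 0
          simp only [gradL, hgoal]
          omega
      · -- ℓ ≠ 0 : strictly smaller edge decoration
        have hℓI : ℓ ∈ Finset.Iic (k ⊓ a.2) :=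
          Finset.mem_toList.1 (List.mem_of_mem_erase hℓmem)
        have hℓne' : ℓ ≠ 0 := by
          intro h; subst h
          exact ((Finset.nodup_toList _).mem_erase_iff.1 hℓmem).1 rfl
        have hle : ℓ ≤ a.2 := le_trans (Finset.mem_Iic.1 hℓI) inf_le_right
        have h1 : sdeg s (a.2 - ℓ) < sdeg s a.2 := sdeg_sub_lt hs hle hℓne'
        simp only [List.mem_flatMap, List.mem_map] at hcF
        obtain ⟨pt, hptm, q, hq, rfl⟩ := hcF
        have h2 : gradT s pt.2 ≤ gradT s t := hbt pt hptm
        have h3 : gradL s q.2.2 ≤ gradL s r := (keyL s hs (k - ℓ) r).1 q hq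
        simp only [gradL, hgoal]
        omega
  termination_by k l => sizeOf l

end

lemma mem_combo_support {V E : Type} {l : List (ℚ × RT V E)} {q : QT V E}
    (h : q ∈ (combo l).support) : ∃ p ∈ l, q = qt p.2 := by
  classical
  induction l with
  | nil => simp [combo] at h
  | cons a l ih =>
    rw [combo, List.map_cons, List.sum_cons] at h
    rcases Finset.mem_union.1 (Finsupp.support_add h) with h' | h'
    · have h2 := Finsupp.support_smul h'
      have h3 := Finsupp.support_single_subset h2
      simp only [Finset.mem_singleton] at h3
      exact ⟨a, List.mem_cons_self, h3⟩
    · obtain ⟨p, hp, hq⟩ := ih h'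
      exact ⟨p, List.mem_cons_of_mem _ hp, hq⟩

/-- **Triangularity and invertibility of `Θ`.**  Let `Θ` be the linear map on the span
of decorated trees (node decorations in `ℕ^{d+1}`, edge decorations in `𝔏 × ℕ^{d+1}`)
given on trees by the recursion
`Θ(X^k ∏ᵢ I_{aᵢ}(τᵢ)) = Σ_ℓ C(k;ℓ) X^{k−|ℓ|} ∏ᵢ I_{aᵢ−ℓᵢ}(Θ(τᵢ))`, `Θ(X^k) = X^k`.
Then, for a scaling `s` with all `s_c > 0` and the grading `G` given by the sum of the
scaled edge decorations, `Θ(τ) = τ + (terms of strictly lower grading)`, and `Θ` is a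
linear isomorphism. -/
theorem Theta_triangular_bijective {L : Type} {d : ℕ} (s : Nd d) (hs : ∀ c, 0 < s c)
    (G : QT (Nd d) (L × Nd d) → ℕ) (hG : ∀ t, G (qt t) = gradT s t)
    (Θ : Span (Nd d) (L × Nd d) →ₗ[ℚ] Span (Nd d) (L × Nd d))
    (hΘ : ∀ t : RT (Nd d) (L × Nd d), Θ (bas t) = combo (ThT t)) :
    (∀ t : RT (Nd d) (L × Nd d),
        ∀ q ∈ (Θ (bas t) - bas t).support, G q < gradT s t) ∧
    Function.Bijective Θ := by
  classical
  have tri : ∀ t : RT (Nd d) (L × Nd d),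
      ∀ q ∈ (Θ (bas t) - bas t).support, G q < gradT s t := by
    intro t q hq
    obtain ⟨m, hperm, hlt⟩ := (keyT s hs t).2
    have hc : Θ (bas t) - bas t = combo m := by
      rw [hΘ t]
      have h1 : combo (ThT t) = combo ((1, t) :: m) := (hperm.map _).sum_eq
      rw [h1]
      simp only [combo, List.map_cons, List.sum_cons, one_smul]
      abel
    rw [hc] at hq
    obtain ⟨p, hp, rfl⟩ := mem_combo_support hq
    rw [hG]
    exact hlt p hp
  refine ⟨tri, ?_⟩
  set N : Span (Nd d) (L × Nd d) →ₗ[ℚ] Span (Nd d) (L × Nd d) := Θ - LinearMap.id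
    with hNdef
  have hΘN : ∀ x, Θ x = x + N x := by
    intro x
    rw [hNdef, LinearMap.sub_apply, LinearMap.id_apply]
    abel
  have hN : ∀ (x : Span (Nd d) (L × Nd d)) q, q ∈ (N x).support →
      ∃ q' ∈ x.support, G q < G q' := by
    intro x q hq
    have hx : N x = x.sum fun a b => N (Finsupp.single a b) := by
      conv_lhs => rw [← Finsupp.sum_single x]
      exact map_finsuppSum N _ _
    rw [hx] at hq
    obtain ⟨q', hq', hmem⟩ := Finset.mem_biUnion.1 (Finsupp.support_sum hq)
    refine ⟨q', hq', ?_⟩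
    obtain ⟨t', ht'⟩ := Quot.exists_rep q'
    have hb : bas t' = Finsupp.single q' 1 := by
      rw [bas, qt, ht']
    have hsingle : Finsupp.single q' (x q') = (x q') • bas t' := by
      rw [hb, Finsupp.smul_single, smul_eq_mul, mul_one]
    have hq3 : q ∈ (N (bas t')).support := by
      have hsub : (N (Finsupp.single q' (x q'))).support ⊆ (N (bas t')).support := by
        rw [hsingle, map_smul]
        exact Finsupp.support_smul
      exact hsub hmem
    have hNb : N (bas t') = Θ (bas t') - bas t' := by
      rw [hNdef, LinearMap.sub_apply, LinearMap.id_apply]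
    rw [hNb] at hq3
    have hGq' : G q' = gradT s t' := by
      rw [← ht']
      exact hG t'
    rw [hGq']
    exact tri t' q hq3
  have key2 : ∀ n (x : Span (Nd d) (L × Nd d)),
      (∀ q ∈ x.support, G q < n) → (N ^ n) x = 0 := by
    intro n
    induction n with
    | zero =>
      intro x hx
      have hx0 : x = 0 := by
        rw [← Finsupp.support_eq_empty]
        by_contra h
        obtain ⟨q, hq⟩ := Finset.nonempty_iff_ne_empty.2 h
        exact Nat.not_lt_zero _ (hx q hq)
      rw [hx0, map_zero]
    | succ n ih =>
      intro x hx
      have hx' : ∀ q ∈ (N x).support, G q < n := by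
        intro q hq
        obtain ⟨q', hq', hlt⟩ := hN x q hq
        exact lt_of_lt_of_le hlt (Nat.lt_succ_iff.1 (hx q' hq'))
      have hps : (N ^ (n + 1)) x = (N ^ n) (N x) := by
        rw [pow_succ]
        rfl
      rw [hps]
      exact ih (N x) hx'
  have nilp : ∀ x : Span (Nd d) (L × Nd d), ∃ n, (N ^ n) x = 0 := fun x =>
    ⟨x.support.sup G + 1, key2 _ x fun q hq => Nat.lt_succ_of_le (Finset.le_sup hq)⟩
  constructor
  · intro x y hxy
    have hz0 : Θ (x - y) = 0 := by rw [map_sub, hxy, sub_self]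
    set z := x - y with hzdef
    have h1 : z + N z = 0 := by rw [← hΘN z, hz0]
    have hNz : N z = -z := by
      have := eq_neg_of_add_eq_zero_right h1
      rw [this]
    have h2 : ∀ n, (N ^ n) z = ((-1 : ℚ) ^ n) • z := by
      intro n
      induction n with
      | zero => simp
      | succ n ih =>
        have hps : (N ^ (n + 1)) z = (N ^ n) (N z) := by
          rw [pow_succ]; rfl
        rw [hps, hNz, map_neg, ih, pow_succ]
        rw [mul_smul]
        simp
    obtain ⟨n, hn⟩ := nilp z
    rw [h2 n] at hn
    have hz : z = 0 := by
      have hne : ((-1 : ℚ) ^ n) ≠ 0 := pow_ne_zero _ (by norm_num)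
      exact (smul_eq_zero.1 hn).resolve_left hne
    have := hzdef ▸ hz
    exact sub_eq_zero.1 this
  · have claim : ∀ n (y : Span (Nd d) (L × Nd d)), (N ^ n) y = 0 →
        ∃ x, x + N x = y := by
      intro n
      induction n with
      | zero =>
        intro y hy
        rw [pow_zero] at hy
        have : y = 0 := hy
        refine ⟨0, ?_⟩
        rw [this, map_zero, add_zero]
      | succ n ih =>
        intro y hy
        have hy' : (N ^ n) (N y) = 0 := by
          have : (N ^ n) (N y) = (N ^ (n + 1)) y := by rw [pow_succ]; rfl
          rw [this, hy]
        obtain ⟨x', hx'⟩ := ih (N y) hy'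
        refine ⟨y - x', ?_⟩
        have hNx' : N x' = N y - x' := eq_sub_of_add_eq' hx'
        rw [map_sub, hNx']
        abel
    intro y
    obtain ⟨n, hn⟩ := nilp y
    obtain ⟨x, hx⟩ := claim n y hn
    exact ⟨x, by rw [hΘN x, hx]⟩
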